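/- Soundness of rule (R2) (part of Theorem 1). Let G be a DAG on a finite vertex set, let X and Y be distinct vertices, let A be a set of non-descendants of {X, Y}, and let W ∈ A. If W and X are d-separated given A \ {W} and W and X are d-connected given (A \ {W}) ∪ {Y}, then X is not a descendant of Y. -/

import Mathlib

/-- `Ancestor E x y` : there is a nonempty directed path from `x` to `y` in the
directed graph with edge relation `E`; i.e. `x` is an ancestor of `y` and `y` a
descendant of `x`. -/
def Ancestor {α : Type*} (E : α → α → Prop) (x y : α) : Prop :=
  Relation.TransGen E x y

/-- A directed graph is acyclic (a DAG) if it has no directed cycle. -/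
def Acyclic {α : Type*} (E : α → α → Prop) : Prop :=
  ∀ v, ¬ Ancestor E v v

/-- `A` is a set of non-descendants of `{x, y}`. -/
def NonDescSet {α : Type*} (E : α → α → Prop) (x y : α) (A : Set α) : Prop :=
  x ∉ A ∧ y ∉ A ∧ ∀ a ∈ A, ¬ Ancestor E x a ∧ ¬ Ancestor E y a

/-- A walk of length `n` with vertex sequence `v 0, v 1, …, v n` and directions `d`:
`d i = true` means the edge `v i → v (i+1)` is in the graph (traversed forwards),
`d i = false` means the edge `v (i+1) → v i` is in the graph (traversed backwards). -/
def IsWalk {α : Type*} (E : α → α → Prop) (n : ℕ) (v : ℕ → α) (d : ℕ → Bool) : Prop :=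
  ∀ i < n, if d i = true then E (v i) (v (i+1)) else E (v (i+1)) (v i)

/-- The interior vertex at position `j` (for `0 < j < n`) is a collider on the walk:
both incident edges of the walk point into it. -/
def IsColliderAt (d : ℕ → Bool) (j : ℕ) : Prop :=
  d (j - 1) = true ∧ d j = false

/-- The activeness condition for a walk given conditioning set `C`: every collider is
in `C` or has a descendant in `C`, and no non-collider is in `C`. -/
def ActiveCond {α : Type*} (E : α → α → Prop) (C : Set α) (n : ℕ) (v : ℕ → α)
    (d : ℕ → Bool) : Prop :=
  ∀ j, 0 < j → j < n →
    (IsColliderAt d j → v j ∈ C ∨ ∃ w ∈ C, Ancestor E (v j) w) ∧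
    (¬ IsColliderAt d j → v j ∉ C)

/-- An active walk given `C`: a walk satisfying the activeness condition. -/
def ActiveWalk {α : Type*} (E : α → α → Prop) (C : Set α) (n : ℕ) (v : ℕ → α)
    (d : ℕ → Bool) : Prop :=
  IsWalk E n v d ∧ ActiveCond E C n v d

/-- `x` and `y` are d-connected given `C`: some walk between them is active given `C`. -/
def DConnected {α : Type*} (E : α → α → Prop) (C : Set α) (x y : α) : Prop :=
  ∃ n v d, v 0 = x ∧ v n = y ∧ ActiveWalk E C n v d

/-- `x` and `y` are d-separated given `C`: no walk between them is active given `C`. -/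
def DSeparated {α : Type*} (E : α → α → Prop) (C : Set α) (x y : α) : Prop :=
  ¬ DConnected E C x y


private lemma path_of_transGen {α : Type*} {E : α → α → Prop} {a b : α}
    (h : Relation.TransGen E a b) :
    ∃ m, 0 < m ∧ ∃ p : ℕ → α, p 0 = a ∧ p m = b ∧ ∀ i < m, E (p i) (p (i+1)) := by
  induction h with
  | @single c h =>
      refine ⟨1, one_pos, fun k => if k = 0 then a else c, by simp, by simp, ?_⟩
      intro i hi
      have : i = 0 := by omega
      subst this; simpa using h
  | @tail b c hab hbc ih =>
      obtain ⟨m, hm, p, hp0, hpm, hedge⟩ := ih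
      refine ⟨m+1, by omega, fun k => if k ≤ m then p k else c, by simp [hp0], by simp, ?_⟩
      intro i hi
      by_cases h1 : i < m
      · simp only [show i ≤ m by omega, show i+1 ≤ m by omega, if_pos]
        exact hedge i h1
      · show E (if i ≤ m then p i else c) (if i + 1 ≤ m then p (i+1) else c)
        rw [if_pos (show i ≤ m by omega), if_neg (show ¬ (i + 1 ≤ m) by omega),
          show i = m by omega, hpm]
        exact hbc

private lemma path_desc {α : Type*} {E : α → α → Prop} {m : ℕ} {p : ℕ → α}
    (hedge : ∀ i < m, E (p i) (p (i+1))) :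
    ∀ i, 0 < i → i ≤ m → Relation.TransGen E (p 0) (p i) := by
  intro i
  induction i with
  | zero => intro h; omega
  | succ k ih =>
      intro _ hk
      rcases Nat.eq_zero_or_pos k with h0 | hkpos
      · subst h0; exact Relation.TransGen.single (hedge 0 (by omega))
      · exact (ih hkpos (by omega)).tail (hedge k (by omega))

/-- Soundness of rule (R2): if for some `W ∈ A` (a set of non-descendants of `{X, Y}`),
`W` and `X` are d-separated given `A \ {W}` but d-connected given `(A \ {W}) ∪ {Y}`,
then `X` is not a descendant of `Y`. -/
theorem rule_R2_sound {α : Type*} [Fintype α] (E : α → α → Prop) (hG : Acyclic E)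
    (X Y : α) (hXY : X ≠ Y) (A : Set α) (hA : NonDescSet E X Y A) (W : α) (hW : W ∈ A)
    (hsep : DSeparated E (A \ {W}) W X)
    (hcon : DConnected E ((A \ {W}) ∪ {Y}) W X) :
    ¬ Ancestor E Y X := by
  intro hYX
  classical
  obtain ⟨n, v, d, hv0, hvn, hwalk, hact⟩ := hcon
  set C : Set α := A \ {W} with hCdef
  have hCC' : C ⊆ C ∪ {Y} := Set.subset_union_left
  by_cases hP : ∃ j, 0 < j ∧ j < n ∧ IsColliderAt d j ∧
      ¬ (v j ∈ C ∨ ∃ w ∈ C, Ancestor E (v j) w)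
  · -- splice a new walk through a directed path from the first problematic collider to X
    set j := Nat.find hP with hjdef
    obtain ⟨hj0, hjn, hjcol, hjbad⟩ := Nat.find_spec hP
    have hjmin : ∀ k < j, 0 < k → k < n → IsColliderAt d k →
        (v k ∈ C ∨ ∃ w ∈ C, Ancestor E (v k) w) := by
      intro k hk hk0 hkn hkcol
      have := Nat.find_min hP hk
      by_contra hcon2
      exact this ⟨hk0, hkn, hkcol, hcon2⟩
    -- v j is Y or an ancestor of Y, hence an ancestor of X
    have hjY : v j = Y ∨ Ancestor E (v j) Y := by
      rcases (hact j hj0 hjn).1 hjcol with h | ⟨w, hw', hanc⟩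
      · rcases h with h | h
        · exact absurd (Or.inl h) hjbad
        · exact Or.inl h
      · rcases hw' with hw' | hw'
        · exact absurd (Or.inr ⟨w, hw', hanc⟩) hjbad
        · rw [Set.mem_singleton_iff] at hw'
          subst hw'
          exact Or.inr hanc
    have hjX : Relation.TransGen E (v j) X := by
      rcases hjY with h | h
      · rw [h]; exact hYX
      · exact Relation.TransGen.trans h hYX
    obtain ⟨m, hm, p, hp0, hpm, hedge⟩ := path_of_transGen hjX
    -- the new walk
    refine hsep ⟨j + m, fun k => if k < j then v k else p (k - j),
      fun k => if k < j then d k else true, ?_, ?_, ?_, ?_⟩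
    · simp only [if_pos hj0]; exact (if_pos hj0).trans hv0
    · simp only [show ¬ (j + m < j) by omega, if_neg, if_false]
      simpa using hpm
    · intro i hi
      have hvv : ∀ k ≤ j, (if k < j then v k else p (k - j)) = v k := by
        intro k hk
        by_cases h : k < j
        · simp [h]
        · have hkj : k = j := by omega
          simp [hkj, hp0]
      by_cases h1 : i < j
      · simp only [if_pos h1, hvv i (by omega), hvv (i+1) (by omega)]
        exact hwalk i (by omega)
      · simp only [if_neg h1, show ¬ (i + 1 < j) by omega, if_neg, if_false, if_true]
        have : i + 1 - j = (i - j) + 1 := by omega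
        rw [this]
        exact hedge (i - j) (by omega)
    · intro k hk0 hkn'
      by_cases h1 : k < j
      · have hcolEq : IsColliderAt (fun k => if k < j then d k else true) k ↔
            IsColliderAt d k := by
          unfold IsColliderAt
          simp only [if_pos h1, if_pos (show k - 1 < j by omega)]
        constructor
        · intro hcol
          simp only [if_pos h1]
          exact hjmin k h1 hk0 (by omega) (hcolEq.mp hcol)
        · intro hncol
          simp only [if_pos h1]
          have := (hact k hk0 (by omega)).2 (fun hc => hncol (hcolEq.mpr hc))
          exact fun hc => this (hCC' hc)
      · have hncol : ¬ IsColliderAt (fun k => if k < j then d k else true) k := by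
          unfold IsColliderAt
          simp only [if_neg h1]
          simp
        constructor
        · intro hcol; exact absurd hcol hncol
        · intro _
          by_cases h2 : k = j
          · subst h2
            simp only [if_neg h1, Nat.sub_self, hp0]
            exact fun hc => hjbad (Or.inl hc)
          · simp only [if_neg h1]
            intro hc
            have hdesc : Relation.TransGen E (v j) (p (k - j)) := by
              have := path_desc hedge (k - j) (by omega) (by omega)
              rwa [hp0] at this
            exact hjbad (Or.inr ⟨p (k - j), hc, hdesc⟩)
  · -- the walk is already active given C
    push_neg at hP
    refine hsep ⟨n, v, d, hv0, hvn, hwalk, ?_⟩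
    intro k hk0 hkn
    constructor
    · intro hcol
      exact hP k hk0 hkn hcol
    · intro hncol
      exact fun hc => (hact k hk0 hkn).2 hncol (hCC' hc)
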